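/- Let d ≥ 2 and let Ω_1, …, Ω_d be nonempty sets, Ω = Ω_1 × ⋯ × Ω_d, and u : Ω → ℝ a tensor function. Suppose there are natural numbers r_0 = r_d = 1 and r_1,…,r_{d-1} such that for every k with 1 ≤ k ≤ d−1 and every sampled tensor B of u (obtained by sampling maps x_i : Fin m_i → Ω_i with arbitrary m_i ≥ 1), the k-th unfolding of B has matrix rank at most r_k. Then there exist TT-core functions u_i : Ω_i → Matrix (Fin r_{i-1}) (Fin r_i) ℝ for i = 1,…,d such that for every (x_1,…,x_d) ∈ Ω, u(x_1,…,x_d) = Σ_{α_0=1}^{r_0} Σ_{α_1=1}^{r_1} ⋯ Σ_{α_d=1}^{r_d} u_1(x_1)(α_0,α_1) u_2(x_2)(α_1,α_2) ⋯ u_d(x_d)(α_{d-1},α_d); equivalently, u(x_1,…,x_d) is the unique entry of the matrix product u_1(x_1) u_2(x_2) ⋯ u_d(x_d). -/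

import Mathlib

/-- The `k`-th unfolding of a `d`-th order tensor `A`: the matrix whose rows are
indexed by the tuples of the first `k` indices, whose columns are indexed by the
tuples of the last `d − k` indices, and whose entries are the entries of `A`. -/
def ttUnfold {d : ℕ} {n : Fin d → ℕ} (A : (∀ i : Fin d, Fin (n i)) → ℝ) (k : ℕ) :
    Matrix ((i : {i : Fin d // i.val < k}) → Fin (n i.1))
      ((i : {i : Fin d // ¬ i.val < k}) → Fin (n i.1)) ℝ :=
  fun row col => A fun i => if h : i.val < k then row ⟨i, h⟩ else col ⟨i, h⟩



set_option maxHeartbeats 1000000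

universe u

lemma rank_rowselect_le {m' n' l' : Type*} [Fintype m'] [Fintype n'] [Fintype l']
    (B : Matrix m' n' ℝ) (h : l' → m') : (B.submatrix h id).rank ≤ B.rank := by
  have : (B.submatrix h id).mulVecLin = (LinearMap.funLeft ℝ ℝ h).comp B.mulVecLin := by
    ext x i
    simp [Matrix.mulVecLin, Matrix.mulVec, dotProduct, Matrix.submatrix]
  rw [Matrix.rank, Matrix.rank, this, LinearMap.range_comp]
  exact Submodule.finrank_map_le _ _

lemma rank_sample_le {m n l o : Type*} [Fintype m] [Fintype n] [Fintype l] [Fintype o]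
    (A : Matrix m n ℝ) (f : l → m) (g : o → n) :
    (Matrix.of fun p q => A (f p) (g q)).rank ≤ A.rank := by
  have heq : (Matrix.of fun p q => A (f p) (g q)) = Matrix.transpose (((A.submatrix f id).transpose).submatrix g id) := by
    ext p q; rfl
  rw [heq, Matrix.rank_transpose]
  calc (((A.submatrix f id).transpose).submatrix g id).rank ≤ ((A.submatrix f id).transpose).rank :=
        rank_rowselect_le _ _
    _ = (A.submatrix f id).rank := Matrix.rank_transpose _
    _ ≤ A.rank := rank_rowselect_le _ _

lemma exists_sample_det_ne_zero {Y : Type*} :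
    ∀ (s : ℕ) (v : Fin s → Y → ℝ), LinearIndependent ℝ v →
      ∃ y : Fin s → Y, (Matrix.of fun i j => v i (y j)).det ≠ 0 := by
  intro s
  induction s with
  | zero =>
    intro v _
    exact ⟨Fin.elim0, by simp [Matrix.det_isEmpty]⟩
  | succ s ih =>
    intro v hv
    obtain ⟨y, hy⟩ := ih (fun i => v i.castSucc) (hv.comp _ (Fin.castSucc_injective s))
    by_contra hcon
    push_neg at hcon
    have hdet : ∀ t : Y,
        (Matrix.of fun i j : Fin (s+1) => v i ((Fin.snoc y t : Fin (s+1) → Y) j)).det = 0 := by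
      intro t; exact hcon (Fin.snoc y t)
    set D : Fin (s+1) → ℝ := fun i =>
      (Matrix.of fun i' j' : Fin s => v (i.succAbove i') (y j')).det with hD
    set e : Fin (s+1) → ℝ := fun i => (-1 : ℝ) ^ (i.val + s) * D i with he
    have hexp : ∀ t : Y, ∑ i : Fin (s+1), e i * v i t = 0 := by
      intro t
      have h1 := Matrix.det_succ_column
        (Matrix.of fun i j : Fin (s+1) => v i ((Fin.snoc y t : Fin (s+1) → Y) j)) (Fin.last s)
      rw [hdet t] at h1
      have h2 : ∀ i : Fin (s+1),
          ((Matrix.of fun i' j' : Fin (s+1) => v i' ((Fin.snoc y t : Fin (s+1) → Y) j')).submatrix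
            i.succAbove (Fin.last s).succAbove)
          = Matrix.of fun i' j' : Fin s => v (i.succAbove i') (y j') := by
        intro i
        ext i' j'
        simp [Fin.succAbove_last, Fin.snoc_castSucc]
      rw [eq_comm] at h1
      calc ∑ i : Fin (s+1), e i * v i t
          = ∑ i : Fin (s+1), (-1) ^ (i.val + (Fin.last s).val) *
              (Matrix.of fun i' j' : Fin (s+1) => v i' ((Fin.snoc y t : Fin (s+1) → Y) j')) i (Fin.last s) *
              ((Matrix.of fun i' j' : Fin (s+1) => v i' ((Fin.snoc y t : Fin (s+1) → Y) j')).submatrix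
                i.succAbove (Fin.last s).succAbove).det := by
            refine Finset.sum_congr rfl fun i _ => ?_
            rw [h2 i]
            simp only [he, hD, Fin.val_last, Matrix.of_apply, Fin.snoc_last]
            ring
        _ = 0 := h1
    have hzero : ∀ i, e i = 0 := by
      refine Fintype.linearIndependent_iff.mp hv e ?_
      funext t
      simpa [Finset.sum_apply, smul_eq_mul] using hexp t
    have hlastD : D (Fin.last s) ≠ 0 := by
      have : (Matrix.of fun i' j' : Fin s => v ((Fin.last s).succAbove i') (y j'))
          = Matrix.of fun i j : Fin s => v i.castSucc (y j) := by
        ext i j; simp [Fin.succAbove_last]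
      rw [hD]
      simp only [this]
      exact hy
    have := hzero (Fin.last s)
    rw [he] at this
    simp only [Fin.val_last] at this
    rcases mul_eq_zero.mp this with h | h
    · exact absurd h (by positivity)
    · exact hlastD h

lemma func_rank_decomp {X Y : Type*} [Nonempty X] (F : X → Y → ℝ) (r : ℕ)
    (h : ∀ (m n : ℕ) (x : Fin m → X) (y : Fin n → Y),
      (Matrix.of fun p q => F (x p) (y q)).rank ≤ r) :
    ∃ (c : Fin r → X) (f : X → Fin r → ℝ),
      ∀ x y, F x y = ∑ j, f x j * F (c j) y := by
  classical
  obtain ⟨b, hbS, hbspan, hbind⟩ := exists_linearIndependent ℝ (Set.range F)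
  -- no r+1 independent elements in b
  have hnot : ∀ t : Finset (Y → ℝ), ↑t ⊆ b → ¬ (t.card = r + 1) := by
    intro t hts hcard
    have eqt : Fin (r+1) ≃ ↥t := (Finset.equivFinOfCardEq hcard).symm
    set v : Fin (r+1) → Y → ℝ := fun i => ((eqt i : ↥t) : Y → ℝ) with hv
    have hinj : Function.Injective (fun i : Fin (r+1) => (⟨(eqt i : ↥t), hts (eqt i).2⟩ : b)) := by
      intro i j hij
      apply eqt.injective
      simp only [Subtype.mk.injEq] at hij
      exact Subtype.ext hij
    have hindv : LinearIndependent ℝ v := hbind.comp _ hinj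
    obtain ⟨y, hy⟩ := exists_sample_det_ne_zero (r+1) v hindv
    have hxs : ∀ i, ∃ x : X, F x = v i := fun i => hbS (hts (eqt i).2)
    choose xs hxsF using hxs
    have hrank : (Matrix.of fun i j => v i (y j)).rank = r + 1 := by
      have hunit : IsUnit (Matrix.of fun i j => v i (y j)) :=
        (Matrix.isUnit_iff_isUnit_det _).mpr (isUnit_iff_ne_zero.mpr hy)
      rw [Matrix.rank_of_isUnit _ hunit, Fintype.card_fin]
    have hle : (Matrix.of fun i j => v i (y j)).rank ≤ r := by
      have : (Matrix.of fun i j => v i (y j))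
          = Matrix.of fun i j => F (xs i) (y j) := by
        ext i j
        simp only [Matrix.of_apply]
        rw [hxsF i]
      rw [this]; exact h _ _ _ _
    omega
  have hfin : b.Finite := by
    by_contra hinf
    obtain ⟨t, hts, hcard⟩ := Set.Infinite.exists_subset_card_eq hinf (r+1)
    exact hnot t hts hcard
  set tb := hfin.toFinset with htb
  have htbb : ↑tb ⊆ b := by rw [htb]; simp
  have hs0r : tb.card ≤ r := by
    by_contra hgt
    push_neg at hgt
    obtain ⟨t', ht's, ht'card⟩ := Finset.exists_subset_card_eq hgt
    exact hnot t' (Set.Subset.trans (Finset.coe_subset.mpr ht's) htbb) ht'card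
  set s0 := tb.card with hs0
  have eq2 : ↥tb ≃ Fin s0 := tb.equivFin
  set c0 : Fin s0 → Y → ℝ := fun j => (eq2.symm j : ↥tb) with hc0
  have hrange : Set.range c0 = b := by
    ext z
    constructor
    · rintro ⟨j, rfl⟩
      exact htbb (eq2.symm j).2
    · intro hz
      exact ⟨eq2 ⟨z, hfin.mem_toFinset.mpr hz⟩, by simp [hc0]⟩
  have hmem : ∀ x, F x ∈ Submodule.span ℝ (Set.range c0) := by
    intro x
    rw [hrange, hbspan]
    exact Submodule.subset_span (Set.mem_range_self x)
  have hex : ∀ x, ∃ g : Fin s0 → ℝ, ∑ i, g i • c0 i = F x := by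
    intro x
    exact (Submodule.mem_span_range_iff_exists_fun ℝ).mp (hmem x)
  choose g hg using hex
  have hxs0 : ∀ j, ∃ x : X, F x = c0 j := fun j => hbS (htbb (eq2.symm j).2)
  choose xs0 hxs0F using hxs0
  refine ⟨fun j => if h' : j.val < s0 then xs0 ⟨j.val, h'⟩ else Classical.arbitrary X,
    fun x j => if h' : j.val < s0 then g x ⟨j.val, h'⟩ else 0, ?_⟩
  intro x y
  have hxy : F x y = ∑ j : Fin s0, g x j * F (xs0 j) y := by
    have := congrFun (hg x) y
    rw [← this]
    simp only [Finset.sum_apply, Pi.smul_apply, smul_eq_mul]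
    exact Finset.sum_congr rfl fun j _ => by rw [hxs0F j]
  rw [hxy]
  set tfun : ℕ → ℝ := fun jn => if h' : jn < s0 then g x ⟨jn, h'⟩ * F (xs0 ⟨jn, h'⟩) y else 0
    with htfun
  have hL : ∑ j : Fin r, (if h' : j.val < s0 then g x ⟨j.val, h'⟩ else 0) *
      F (if h' : j.val < s0 then xs0 ⟨j.val, h'⟩ else Classical.arbitrary X) y
      = ∑ jn ∈ Finset.range r, tfun jn := by
    rw [Finset.sum_range fun jn => tfun jn]
    refine Finset.sum_congr rfl fun j _ => ?_
    by_cases h' : j.val < s0 <;> simp [htfun, h']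
  have hR : ∑ j : Fin s0, g x j * F (xs0 j) y = ∑ jn ∈ Finset.range s0, tfun jn := by
    rw [Finset.sum_range fun jn => tfun jn]
    refine Finset.sum_congr rfl fun j _ => ?_
    simp [htfun, j.isLt]
  rw [hR]
  beta_reduce
  rw [hL]
  refine Finset.sum_subset (Finset.range_subset_range.mpr hs0r) fun jn _ hjn => ?_
  have : ¬ jn < s0 := by simpa using hjn
  simp [htfun, this]

lemma ttfam : ∀ (n : ℕ) (Ω : Fin (n+1) → Type u) (hΩ : ∀ i, Nonempty (Ω i))
    (r : Fin (n+2) → ℕ) (v : Fin (r 0) → ((i : Fin (n+1)) → Ω i) → ℝ)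
    (hlast : r (Fin.last (n+1)) = 1)
    (H : ∀ (k : ℕ) (hk : k ≤ n) (m m' : ℕ) (ρ : Fin m → Fin (r 0))
      (a : Fin m → (i : Fin (n+1)) → Ω i) (b : Fin m' → (i : Fin (n+1)) → Ω i),
      (Matrix.of fun p q => v (ρ p) (fun i => if i.val < k then a p i else b q i)).rank
        ≤ r ⟨k, by omega⟩),
    ∃ cores : (i : Fin (n+1)) → Ω i → Matrix (Fin (r i.castSucc)) (Fin (r i.succ)) ℝ,
      ∀ (β : Fin (r 0)) (x : (i : Fin (n+1)) → Ω i),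
        v β x = ∑ α : (j : Fin (n+1)) → Fin (r j.succ),
          ∏ i : Fin (n+1), cores i (x i)
            ((Fin.cons β α : (j : Fin (n+2)) → Fin (r j)) i.castSucc)
            ((Fin.cons β α : (j : Fin (n+2)) → Fin (r j)) i.succ) := by
  intro n
  induction n with
  | zero =>
    intro Ω hΩ r v hlast H
    refine ⟨fun i => Fin.cases (motive := fun i => Ω i → Matrix (Fin (r i.castSucc)) (Fin (r i.succ)) ℝ)
      (fun ω => Matrix.of fun β _ => v β (Fin.cons ω (fun j => j.elim0))) (fun j => j.elim0) i, ?_⟩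
    intro β x
    have hx : (Fin.cons (x 0) (fun j => j.elim0) : (i : Fin 1) → Ω i) = x :=
      funext fun i => Fin.cases rfl (fun j => j.elim0) i
    have hcard : Fintype.card ((j : Fin 1) → Fin (r j.succ)) = 1 := by
      rw [Fintype.card_pi]
      rw [Fin.prod_univ_one]
      rw [Fintype.card_fin]
      rw [show (0 : Fin 1).succ = Fin.last 1 by ext; simp]
      exact hlast
    rw [Finset.sum_congr rfl (fun α _ => ?_), Finset.sum_const, Finset.card_univ, hcard,
      one_smul]
    rw [Fin.prod_univ_one]
    simp only [Fin.castSucc_zero, Fin.cons_zero, Fin.cases_zero, Matrix.of_apply]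
    rw [hx]
  | succ n ih =>
    intro Ω hΩ r v hlast H
    by_cases h0 : r 0 = 0
    · refine ⟨fun i ω => 0, ?_⟩
      intro β x
      exact absurd β.isLt (by omega)
    · haveI : Nonempty (Fin (r 0)) := ⟨⟨0, Nat.pos_of_ne_zero h0⟩⟩
      haveI : Nonempty (Ω 0) := hΩ 0
      set R1 : ℕ := r ((0 : Fin (n+2)).succ) with hR1
      set F : (Fin (r 0) × Ω 0) → ((j : Fin (n+1)) → Ω j.succ) → ℝ :=
        fun xp y => v xp.1 (Fin.cons xp.2 y) with hFdef
      have hFrank : ∀ (m m' : ℕ) (xs : Fin m → Fin (r 0) × Ω 0)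
          (ys : Fin m' → (j : Fin (n+1)) → Ω j.succ),
          (Matrix.of fun p q => F (xs p) (ys q)).rank ≤ R1 := by
        intro m m' xs ys
        have h1eq : (⟨1, by omega⟩ : Fin (n+3)) = (0 : Fin (n+2)).succ := by
          ext; simp
        have := H 1 (by omega) m m' (fun p => (xs p).1)
          (fun p => Fin.cons (xs p).2 (fun j => (hΩ j.succ).some))
          (fun q => Fin.cons ((hΩ 0).some) (ys q))
        rw [h1eq] at this
        have heq : (Matrix.of fun p q => v ((fun p => (xs p).1) p)
            (fun i => if i.val < 1 then (fun p => Fin.cons (xs p).2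
                (fun j => (hΩ j.succ).some)) p i
              else (fun q => Fin.cons ((hΩ 0).some) (ys q)) q i))
            = Matrix.of fun p q => F (xs p) (ys q) := by
          ext p q
          simp only [Matrix.of_apply, hFdef]
          congr 1
          funext i
          refine Fin.cases ?_ (fun j => ?_) i
          · simp
          · simp [Fin.cons_succ]
        rw [heq] at this
        exact this
      obtain ⟨c, f, hFdec⟩ := func_rank_decomp F R1 hFrank
      -- apply the induction hypothesis to the shifted family
      obtain ⟨cores', hv'⟩ := ih (fun j => Ω j.succ) (fun j => hΩ j.succ)
        (fun j => r j.succ) (fun γ y => F (c γ) y)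
        (by
          show r (Fin.last (n+1)).succ = 1
          rw [show (Fin.last (n+1)).succ = Fin.last (n+2) from Fin.succ_last _]
          exact hlast)
        (by
          intro k hk m m' ρ' a' b'
          have hkeq : ((⟨k, by omega⟩ : Fin (n+2)).succ) = (⟨k+1, by omega⟩ : Fin (n+3)) := rfl
          have := H (k+1) (by omega) m m' (fun p => (c (ρ' p)).1)
            (fun p => Fin.cons ((c (ρ' p)).2) (a' p))
            (fun q => Fin.cons ((hΩ 0).some) (b' q))
          have heq : (Matrix.of fun p q => v ((fun p => (c (ρ' p)).1) p)
              (fun i => if i.val < k+1 then (fun p => Fin.cons ((c (ρ' p)).2) (a' p)) p i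
                else (fun q => Fin.cons ((hΩ 0).some) (b' q)) q i))
              = Matrix.of fun p q => F (c (ρ' p))
                  (fun i => if i.val < k then a' p i else b' q i) := by
            ext p q
            simp only [Matrix.of_apply, hFdef]
            congr 1
            funext i
            refine Fin.cases ?_ (fun j => ?_) i
            · simp
            · simp only [Fin.cons_succ, Fin.val_succ, Nat.add_lt_add_iff_right]
          rw [heq] at this
          exact this)
      -- assemble the cores
      have h00 : ((0 : Fin (n+2)).castSucc : Fin (n+3)) = 0 := by ext; simp
      have hc0 : r ((0 : Fin (n+2)).castSucc) = r 0 := congrArg r h00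
      have hrow : ∀ j : Fin (n+1), r (j.succ.castSucc) = r (j.castSucc.succ) :=
        fun j => congrArg r (Fin.succ_castSucc j).symm
      refine ⟨fun i => Fin.cases
        (motive := fun i => Ω i → Matrix (Fin (r i.castSucc)) (Fin (r i.succ)) ℝ)
        (fun ω => Matrix.of fun β γ => f (Fin.cast hc0 β, ω) γ)
        (fun j ω => Matrix.of fun a b => cores' j ω (Fin.cast (hrow j) a) b) i, ?_⟩
      intro β x
      have hvx : v β x = F (β, x 0) (Fin.tail x) :=
        congrArg (v β) (Fin.cons_self_tail x).symm
      rw [hvx, hFdec (β, x 0) (Fin.tail x)]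
      symm
      rw [← Equiv.sum_comp (Fin.consEquiv (fun j : Fin (n+2) => Fin (r j.succ)))]
      rw [Fintype.sum_prod_type]
      refine Finset.sum_congr rfl fun γ _ => ?_
      rw [hv' γ (Fin.tail x), Finset.mul_sum]
      refine Finset.sum_congr rfl fun t _ => ?_
      rw [Fin.prod_univ_succ]
      simp only [Fin.consEquiv_apply, Fin.cases_zero, Fin.cases_succ, Fin.cons_succ,
        Matrix.of_apply]
      congr 1

/-- **Functional tensor train decomposition.** Let `u` be a tensor function on a
product of nonempty domains `Ω 1 × ⋯ × Ω d`. If there are ranks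
`(r 0, …, r d)` with `r 0 = r d = 1` such that for every `1 ≤ k ≤ d − 1` the
`k`-th unfolding of every sampled tensor of `u` has rank at most `r k`, then `u`
admits a functional tensor train decomposition with TT-core functions
`u_i : Ω i → Matrix (Fin (r (i-1))) (Fin (r i)) ℝ`. -/
theorem functional_tensor_train_decomposition
    (d : ℕ) (hd : 2 ≤ d) (Ω : Fin d → Type*) (hΩ : ∀ i, Nonempty (Ω i))
    (u : (∀ i : Fin d, Ω i) → ℝ)
    (r : Fin (d + 1) → ℕ) (hr0 : r 0 = 1) (hrd : r (Fin.last d) = 1)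
    (hrank : ∀ k : Fin (d + 1), 1 ≤ k.val → k.val ≤ d - 1 →
      ∀ (m : Fin d → ℕ), (∀ i, 1 ≤ m i) → ∀ x : ∀ i : Fin d, Fin (m i) → Ω i,
        (ttUnfold (fun j : ∀ i : Fin d, Fin (m i) => u fun i => x i (j i)) k.val).rank ≤ r k) :
    ∃ cores : ∀ i : Fin d, Ω i → Matrix (Fin (r i.castSucc)) (Fin (r i.succ)) ℝ,
      ∀ x : ∀ i : Fin d, Ω i,
        u x = ∑ α : ∀ j : Fin (d + 1), Fin (r j),
          ∏ i : Fin d, cores i (x i) (α i.castSucc) (α i.succ) := by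
  classical
  obtain ⟨n, rfl⟩ : ∃ n, d = n + 1 := ⟨d - 1, by omega⟩
  have H : ∀ (k : ℕ) (hk : k ≤ n) (m m' : ℕ) (ρ : Fin m → Fin (r 0))
      (a : Fin m → (i : Fin (n+1)) → Ω i) (b : Fin m' → (i : Fin (n+1)) → Ω i),
      (Matrix.of fun p q => (fun _ : Fin (r 0) => u) (ρ p)
        (fun i => if i.val < k then a p i else b q i)).rank ≤ r ⟨k, by omega⟩ := by
    intro k hk m m' ρ a b
    rcases Nat.eq_zero_or_pos k with hk0 | hkpos
    · subst hk0
      have hzeq : (⟨0, by omega⟩ : Fin (n+2)) = 0 := by ext; simp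
      rw [hzeq]
      have heq : (Matrix.of fun (p : Fin m) (q : Fin m') => (fun _ : Fin (r 0) => u) (ρ p)
          (fun i => if i.val < 0 then a p i else b q i))
          = Matrix.of fun p q => (Matrix.of fun (_ : Fin 1) (q : Fin m') =>
              u (fun i => b q i)) ((fun _ => 0) p) (id q) := by
        ext p q
        simp
      rw [heq]
      calc (Matrix.of fun p q => (Matrix.of fun (_ : Fin 1) (q : Fin m') =>
              u (fun i => b q i)) ((fun _ => 0) p) (id q)).rank
          ≤ (Matrix.of fun (_ : Fin 1) (q : Fin m') => u (fun i => b q i)).rank :=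
            rank_sample_le _ _ _
        _ ≤ Fintype.card (Fin 1) := Matrix.rank_le_card_height _
        _ ≤ r 0 := by simp [hr0]
    · rcases Nat.eq_zero_or_pos m with hm0 | hmpos
      · subst hm0
        calc (Matrix.of fun p q => (fun _ : Fin (r 0) => u) (ρ p)
              (fun i => if i.val < k then a p i else b q i)).rank
            ≤ Fintype.card (Fin 0) := Matrix.rank_le_card_height _
          _ ≤ _ := by simp
      rcases Nat.eq_zero_or_pos m' with hm'0 | hm'pos
      · subst hm'0
        calc (Matrix.of fun p q => (fun _ : Fin (r 0) => u) (ρ p)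
              (fun i => if i.val < k then a p i else b q i)).rank
            ≤ Fintype.card (Fin 0) := Matrix.rank_le_card_width _
          _ ≤ _ := by simp
      -- main case
      set msize : Fin (n+1) → ℕ := fun i => if i.val < k then m else m' with hmsize
      have hm1 : ∀ i, 1 ≤ msize i := by
        intro i
        rw [hmsize]
        dsimp only
        split <;> omega
      set xs : ∀ i : Fin (n+1), Fin (msize i) → Ω i := fun i jj =>
        if h : i.val < k then a (Fin.cast (if_pos h) jj) i
        else b (Fin.cast (if_neg h) jj) i with hxs
      have hb := hrank ⟨k, by omega⟩ (by exact hkpos) (by simp; omega) msize hm1 xs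
      set B : ((i : Fin (n+1)) → Fin (msize i)) → ℝ :=
        fun jj => u (fun i => xs i (jj i)) with hB
      have heq : (Matrix.of fun p q => (fun _ : Fin (r 0) => u) (ρ p)
          (fun i => if i.val < k then a p i else b q i))
          = Matrix.of fun p q => (ttUnfold B k)
              ((fun p (i : {i : Fin (n+1) // i.val < k}) =>
                Fin.cast (if_pos i.2).symm p) p)
              ((fun q (i : {i : Fin (n+1) // ¬ i.val < k}) =>
                Fin.cast (if_neg i.2).symm q) q) := by
        ext p q
        simp only [Matrix.of_apply, ttUnfold, hB]
        congr 1
        funext i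
        by_cases h : i.val < k
        · rw [if_pos h, dif_pos h, hxs]
          dsimp only
          rw [dif_pos h]
          exact congrArg (fun z => a z i) (Fin.ext (by simp)).symm
        · rw [if_neg h, dif_neg h, hxs]
          dsimp only
          rw [dif_neg h]
          exact congrArg (fun z => b z i) (Fin.ext (by simp)).symm
      rw [heq]
      exact le_trans (rank_sample_le _ _ _) hb
  obtain ⟨cores, hv⟩ := ttfam n Ω hΩ r (fun _ : Fin (r 0) => u) hrd H
  refine ⟨cores, ?_⟩
  intro x
  symm
  rw [← Equiv.sum_comp (Fin.consEquiv (fun j : Fin (n+2) => Fin (r j)))]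
  rw [Fintype.sum_prod_type]
  have hone : ∀ β : Fin (r 0),
      (∑ t : (j : Fin (n+1)) → Fin (r j.succ), ∏ i : Fin (n+1), cores i (x i)
        ((Fin.consEquiv (fun j : Fin (n+2) => Fin (r j))) (β, t) i.castSucc)
        ((Fin.consEquiv (fun j : Fin (n+2) => Fin (r j))) (β, t) i.succ)) = u x :=
    fun β => (hv β x).symm
  rw [Finset.sum_congr rfl (fun β _ => hone β), Finset.sum_const, Finset.card_univ,
    Fintype.card_fin, hr0, one_smul]
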